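/- Let Γ₀ be a subgroup of a group Γ such that the quasi-normalizer of Γ₀ in Γ equals Γ₀ (i.e., every element of Γ whose double coset behavior is finite lies in Γ₀; concretely assume: for every g ∈ Γ with g ∉ Γ₀, the subgroup Γ₀ ∩ gΓ₀g⁻¹ has infinite index in Γ₀). If s ∈ Γ with s ∉ Γ₀ and A, B ⊆ Γ are finite subsets, then there exist t, r ∈ Γ₀ such that t s r ∉ A Γ₀ B. -/

import Mathlib

open scoped Pointwise

/-- Auxiliary: finitely many left cosets of subgroups of infinite relative index
in `Γ₀` cannot cover `Γ₀`. -/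
lemma avoid_cosets {Γ : Type*} [Group Γ] (Γ₀ : Subgroup Γ) {ι : Type*} [Fintype ι]
    (g : ι → Γ) (K : ι → Subgroup Γ) (h : ∀ i, (K i).relIndex Γ₀ = 0) :
    ∃ t ∈ Γ₀, ∀ i, t ∉ g i • (K i : Set Γ) := by
  by_contra hc
  push_neg at hc
  classical
  -- representatives in Γ₀ of the nonempty intersections
  have hrep : ∀ i : ι, (∃ x : Γ₀, (x : Γ) ∈ g i • (K i : Set Γ)) →
      ∃ x : Γ₀, (x : Γ) ∈ g i • (K i : Set Γ) := fun i hi => hi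
  let c : ι → Γ₀ := fun i =>
    if hi : ∃ x : Γ₀, (x : Γ) ∈ g i • (K i : Set Γ) then hi.choose else 1
  have hcovers : ⋃ i ∈ (Finset.univ : Finset ι),
      (c i) • (((K i).subgroupOf Γ₀ : Subgroup Γ₀) : Set Γ₀) = Set.univ := by
    rw [Set.eq_univ_iff_forall]
    intro t
    obtain ⟨i, hi⟩ := hc (t : Γ) t.2
    have hex : ∃ x : Γ₀, (x : Γ) ∈ g i • (K i : Set Γ) := ⟨t, hi⟩
    have hci : ((c i : Γ₀) : Γ) ∈ g i • (K i : Set Γ) := by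
      simp only [c, dif_pos hex]; exact hex.choose_spec
    simp only [Set.mem_iUnion]
    refine ⟨i, Finset.mem_univ i, ?_⟩
    rw [mem_leftCoset_iff]
    rw [mem_leftCoset_iff] at hi hci
    have : ((((c i)⁻¹ * t : Γ₀)) : Γ) ∈ K i := by
      push_cast
      have : ((g i)⁻¹ * (c i : Γ))⁻¹ * ((g i)⁻¹ * (t : Γ)) ∈ K i :=
        (K i).mul_mem (by exact (K i).inv_mem hci) hi
      simpa [mul_assoc] using this
    exact this
  obtain ⟨k, -, hk⟩ := Subgroup.exists_finiteIndex_of_leftCoset_cover hcovers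
  exact hk.index_ne_zero (h k)

/-- Lemma "astuce": if the quasi-normalizer of `Γ₀` in `Γ` equals `Γ₀`
(concretely: `Γ₀ ∩ gΓ₀g⁻¹` has infinite index in `Γ₀` for all `g ∉ Γ₀`),
then for `s ∉ Γ₀` and finite sets `A B ⊆ Γ` there exist `t, r ∈ Γ₀` with
`t * s * r ∉ A Γ₀ B`. -/
theorem astuce {Γ : Type*} [Group Γ] (Γ₀ : Subgroup Γ)
    (hqn : ∀ g : Γ, g ∉ Γ₀ →
      (Subgroup.map (MulAut.conj g).toMonoidHom Γ₀).relIndex Γ₀ = 0)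
    (s : Γ) (hs : s ∉ Γ₀) (A B : Set Γ) (hA : A.Finite) (hB : B.Finite) :
    ∃ t ∈ Γ₀, ∃ r ∈ Γ₀, t * s * r ∉ A * (Γ₀ : Set Γ) * B := by
  classical
  have hAf : Fintype A := hA.fintype
  have hBf : Fintype B := hB.fintype
  -- Step 1: choose t ∈ Γ₀ with t ∉ a • Γ₀ • s⁻¹ for all a ∈ A.
  obtain ⟨t, ht0, ht⟩ := avoid_cosets Γ₀ (ι := A)
    (fun a => (a : Γ) * s⁻¹)
    (fun _ => Subgroup.map (MulAut.conj s).toMonoidHom Γ₀)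
    (fun _ => hqn s hs)
  -- Step 2: choose r ∈ Γ₀ avoiding the cosets coming from pairs (a, b) with b ∉ Γ₀.
  obtain ⟨r, hr0, hr⟩ := avoid_cosets Γ₀ (ι := {p : A × B // (p.2 : Γ) ∉ Γ₀})
    (fun p => s⁻¹ * t⁻¹ * (p.1.1 : Γ) * (p.1.2 : Γ))
    (fun p => Subgroup.map (MulAut.conj (p.1.2 : Γ)⁻¹).toMonoidHom Γ₀)
    (fun p => hqn _ (fun hb => p.2 ((inv_inv (p.1.2 : Γ)) ▸ Γ₀.inv_mem hb)))
  refine ⟨t, ht0, r, hr0, ?_⟩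
  rintro hmem
  obtain ⟨x, hx, b, hb, hxb⟩ := hmem
  obtain ⟨a, ha, γ, hγ, haγ⟩ := hx
  -- t * s * r = a * γ * b
  by_cases hbΓ : b ∈ Γ₀
  · -- then t ∈ (a * s⁻¹) • (s Γ₀ s⁻¹)
    refine ht ⟨a, ha⟩ ?_
    rw [mem_leftCoset_iff]
    refine ⟨γ * b * r⁻¹, Γ₀.mul_mem (Γ₀.mul_mem hγ hbΓ) (Γ₀.inv_mem hr0), ?_⟩
    have : t * s * r = a * γ * b := by rw [← hxb, ← haγ]
    simp only [MulEquiv.coe_toMonoidHom, MulAut.conj_apply]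
    have ht' : t = a * γ * b * r⁻¹ * s⁻¹ := by
      rw [← this]; group
    rw [ht']
    group
  · -- then r ∈ (s⁻¹ t⁻¹ a b) • (b⁻¹ Γ₀ b)
    refine hr ⟨(⟨a, ha⟩, ⟨b, hb⟩), hbΓ⟩ ?_
    rw [mem_leftCoset_iff]
    refine ⟨γ, hγ, ?_⟩
    have : t * s * r = a * γ * b := by rw [← hxb, ← haγ]
    simp only [MulEquiv.coe_toMonoidHom, MulAut.conj_apply]
    have hr' : r = s⁻¹ * t⁻¹ * (a * γ * b) := by
      rw [← this]; group
    rw [hr']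
    group
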